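/- Let k ≥ 2 be an integer and K ≥ 2 a real number. If A ⊆ [n]^k satisfies |A| ≥ K·c_k(n), then Γ_k(A) ≥ (K/2)^{k+1}·c_k(n). -/

import Mathlib

/-- The grid `{1,…,n}^k` as a finset of functions `Fin k → ℕ`. -/
def gridNk (k n : ℕ) : Finset (Fin k → ℕ) :=
  Fintype.piFinset fun _ => Finset.Icc 1 n

/-- `C` is a `k`-dimensional corner in `[n]^k`: a set of points
`{a} ∪ {a + d·eᵢ : 1 ≤ i ≤ k}` for some `a` and integer `d > 0`, all lying in the grid. -/
def IsGridCorner (k n : ℕ) (C : Finset (Fin k → ℕ)) : Prop :=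
  ∃ a : Fin k → ℕ, ∃ d : ℕ, 0 < d ∧
    C = insert a (Finset.image (fun i => Function.update a i (a i + d)) Finset.univ) ∧
    C ⊆ gridNk k n

/-- `A` is `k`-dimensional corner-free: it contains no `k`-dimensional corner. -/
def GridCornerFree (k n : ℕ) (A : Finset (Fin k → ℕ)) : Prop :=
  ∀ C : Finset (Fin k → ℕ), IsGridCorner k n C → ¬ C ⊆ A

/-- `c_k(n)`: the maximum size of a `k`-dimensional corner-free subset of `[n]^k`. -/
noncomputable def cornerFreeNumber (k n : ℕ) : ℕ :=
  sSup {m : ℕ | ∃ A : Finset (Fin k → ℕ), A ⊆ gridNk k n ∧ GridCornerFree k n A ∧ A.card = m}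

/-- `Γ_k(A)`: the number of `k`-dimensional corners contained in `A`. -/
noncomputable def cornerCount (k n : ℕ) (A : Finset (Fin k → ℕ)) : ℕ :=
  Set.ncard {C : Finset (Fin k → ℕ) | IsGridCorner k n C ∧ C ⊆ A}

open Finset
open scoped Classical

/-- The finset of corners contained in `A`. -/
noncomputable def cornersFin (k n : ℕ) (A : Finset (Fin k → ℕ)) : Finset (Finset (Fin k → ℕ)) :=
  A.powerset.filter (IsGridCorner k n)

lemma cornerCount_eq (k n : ℕ) (A : Finset (Fin k → ℕ)) :
    cornerCount k n A = (cornersFin k n A).card := by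
  rw [cornerCount, ← Set.ncard_coe_finset]
  congr 1
  ext C
  simp [cornersFin, Finset.mem_powerset, and_comm]

lemma corner_nonempty {k n : ℕ} {C : Finset (Fin k → ℕ)} (h : IsGridCorner k n C) :
    C.Nonempty := by
  obtain ⟨a, d, hd, hC, -⟩ := h
  exact ⟨a, hC ▸ Finset.mem_insert_self _ _⟩

lemma corner_card {k n : ℕ} {C : Finset (Fin k → ℕ)} (h : IsGridCorner k n C) :
    C.card = k + 1 := by
  obtain ⟨a, d, hd, hC, -⟩ := h
  subst hC
  have hinj : ∀ x ∈ (Finset.univ : Finset (Fin k)), ∀ y ∈ Finset.univ,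
      Function.update a x (a x + d) = Function.update a y (a y + d) → x = y := by
    intro x _ y _ hxy
    by_contra hne
    have h1 := congrFun hxy x
    rw [Function.update_self, Function.update_of_ne hne] at h1
    omega
  have hnm : a ∉ Finset.image (fun i => Function.update a i (a i + d)) Finset.univ := by
    simp only [Finset.mem_image, Finset.mem_univ, true_and]
    rintro ⟨i, hi⟩
    have := congrFun hi i
    rw [Function.update_self] at this
    omega
  rw [Finset.card_insert_of_notMem hnm, Finset.card_image_of_injOn]
  · simp
  · intro x hx y hy; exact hinj x hx y hy

lemma cornersFin_mono {k n : ℕ} {S T : Finset (Fin k → ℕ)} (h : S ⊆ T) :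
    cornersFin k n S ⊆ cornersFin k n T :=
  Finset.filter_subset_filter _ (Finset.powerset_mono.2 h)

lemma cornerFree_card_le {k n : ℕ} {S : Finset (Fin k → ℕ)} (hS : S ⊆ gridNk k n)
    (hfree : GridCornerFree k n S) : S.card ≤ cornerFreeNumber k n := by
  apply le_csSup
  · refine ⟨(gridNk k n).card, ?_⟩
    rintro m ⟨B, hB, -, rfl⟩
    exact Finset.card_le_card hB
  · exact ⟨S, hS, hfree, rfl⟩

/-- Deletion lemma: `|S| ≤ Γ(S) + c`. -/
lemma deletion {k n : ℕ} (S : Finset (Fin k → ℕ)) (hS : S ⊆ gridNk k n) :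
    S.card ≤ (cornersFin k n S).card + cornerFreeNumber k n := by
  induction S using Finset.strongInductionOn with
  | _ S ih =>
    by_cases hfree : GridCornerFree k n S
    · exact le_add_left (cornerFree_card_le hS hfree)
    · simp only [GridCornerFree, not_forall, not_not] at hfree
      obtain ⟨C, hC, hCS⟩ := hfree
      obtain ⟨x, hx⟩ := corner_nonempty hC
      have hxS : x ∈ S := hCS hx
      have hsub : S.erase x ⊂ S := Finset.erase_ssubset hxS
      have h1 := ih (S.erase x) hsub ((Finset.erase_subset _ _).trans hS)
      have hCmem : C ∈ cornersFin k n S := by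
        simp [cornersFin, Finset.mem_powerset, hCS, hC]
      have hCnot : C ∉ cornersFin k n (S.erase x) := by
        simp only [cornersFin, Finset.mem_filter, Finset.mem_powerset, not_and]
        intro hsub' _
        exact (Finset.notMem_erase x S) (hsub' hx)
      have hins : insert C (cornersFin k n (S.erase x)) ⊆ cornersFin k n S := by
        rw [Finset.insert_subset_iff]
        exact ⟨hCmem, cornersFin_mono (Finset.erase_subset _ _)⟩
      have h2 : (cornersFin k n (S.erase x)).card + 1 ≤ (cornersFin k n S).card := by
        have := Finset.card_le_card hins
        rwa [Finset.card_insert_of_notMem hCnot] at this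
      have h3 : (S.erase x).card + 1 = S.card := Finset.card_erase_add_one hxS
      omega

/-- Binomial identity: `∑_{T ⊆ B} p^|T| q^(|B|-|T|) = (p+q)^|B|`. -/
lemma sum_powerset_weight {α : Type*} [DecidableEq α] (B : Finset α) (p q : ℝ) :
    ∑ T ∈ B.powerset, p ^ T.card * q ^ (B.card - T.card) = (p + q) ^ B.card := by
  have := Finset.prod_add (fun _ : α => p) (fun _ : α => q) B
  simp only [Finset.prod_const] at this
  rw [this]
  apply Finset.sum_congr rfl
  intro T hT
  rw [Finset.mem_powerset] at hT
  rw [Finset.card_sdiff_of_subset hT]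

/-- `∑_{C ⊆ S ⊆ A} p^|S| q^(|A|-|S|) = p^|C|` when `p + q = 1`. -/
lemma sum_powerset_weight_filter {α : Type*} [DecidableEq α] (A C : Finset α) (hCA : C ⊆ A)
    (p q : ℝ) (hpq : p + q = 1) :
    ∑ S ∈ A.powerset.filter (fun S => C ⊆ S), p ^ S.card * q ^ (A.card - S.card)
      = p ^ C.card := by
  have himg : A.powerset.filter (fun S => C ⊆ S)
      = (A \ C).powerset.image (fun T => T ∪ C) := by
    ext S
    simp only [Finset.mem_filter, Finset.mem_powerset, Finset.mem_image]
    constructor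
    · rintro ⟨hSA, hCS⟩
      exact ⟨S \ C, fun x hx => by
        simp only [Finset.mem_sdiff] at hx ⊢
        exact ⟨hSA hx.1, hx.2⟩, by
        rw [Finset.sdiff_union_of_subset hCS]⟩
    · rintro ⟨T, hT, rfl⟩
      constructor
      · exact Finset.union_subset (fun x hx => (Finset.mem_sdiff.1 (hT hx)).1) hCA
      · exact Finset.subset_union_right
  rw [himg, Finset.sum_image]
  · have hcardA : A.card = (A \ C).card + C.card := by
      rw [Finset.card_sdiff_of_subset hCA]
      have := Finset.card_le_card hCA
      omega
    have : ∀ T ∈ (A \ C).powerset,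
        p ^ (T ∪ C).card * q ^ (A.card - (T ∪ C).card)
          = p ^ C.card * (p ^ T.card * q ^ ((A \ C).card - T.card)) := by
      intro T hT
      rw [Finset.mem_powerset] at hT
      have hdisj : Disjoint T C := by
        apply Finset.disjoint_left.2
        intro x hx hxC
        exact (Finset.mem_sdiff.1 (hT hx)).2 hxC
      have hcardU : (T ∪ C).card = T.card + C.card := Finset.card_union_of_disjoint hdisj
      have hTle := Finset.card_le_card hT
      rw [hcardU]
      have : A.card - (T.card + C.card) = (A \ C).card - T.card := by omega
      rw [this, pow_add]
      ring
    rw [Finset.sum_congr rfl this, ← Finset.mul_sum, sum_powerset_weight, hpq, one_pow, mul_one]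
  · intro T hT T' hT' h
    rw [Finset.mem_coe, Finset.mem_powerset] at hT hT'
    have : ∀ (U : Finset α), U ⊆ A \ C → (U ∪ C) \ C = U := by
      intro U hU
      rw [Finset.union_sdiff_right]
      exact Finset.sdiff_eq_self_of_disjoint (Finset.disjoint_left.2
        fun x hx hxC => (Finset.mem_sdiff.1 (hU hx)).2 hxC)
    rw [← this T hT, ← this T' hT', show T ∪ C = T' ∪ C from h]

/-- Improved supersaturation: if `k ≥ 2`, `K ≥ 2` and `A ⊆ [n]^k` has `|A| ≥ K·c_k(n)`,
then `Γ_k(A) ≥ (K/2)^(k+1)·c_k(n)`. -/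
theorem corner_supersaturation_improved (k : ℕ) (hk : 2 ≤ k) (K : ℝ) (hK : 2 ≤ K)
    (n : ℕ) (hn : 0 < n) (A : Finset (Fin k → ℕ)) (hA : A ⊆ gridNk k n)
    (hcard : K * (cornerFreeNumber k n : ℝ) ≤ (A.card : ℝ)) :
    (K / 2) ^ (k + 1) * (cornerFreeNumber k n : ℝ) ≤ (cornerCount k n A : ℝ) := by
  set c : ℝ := (cornerFreeNumber k n : ℝ) with hc
  have hc0 : 0 ≤ c := Nat.cast_nonneg _
  have hK0 : (0:ℝ) < K := by linarith
  set p : ℝ := 2 / K with hp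
  set q : ℝ := 1 - p with hqdef
  have hp0 : 0 < p := by positivity
  have hp1 : p ≤ 1 := by
    rw [hp, div_le_one hK0]; linarith
  have hq0 : 0 ≤ q := by simp [hqdef]; linarith
  have hpq : p + q = 1 := by simp [hqdef]
  set w : Finset (Fin k → ℕ) → ℝ := fun S => p ^ S.card * q ^ (A.card - S.card) with hw
  have hw0 : ∀ S, 0 ≤ w S := fun S => by positivity
  -- Step A: weighted corner count
  have stepA : ∑ S ∈ A.powerset, w S * ((cornersFin k n S).card : ℝ)
      = p ^ (k + 1) * ((cornersFin k n A).card : ℝ) := by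
    have hfilter : ∀ S ∈ A.powerset,
        ((cornersFin k n S).card : ℝ)
          = ∑ C ∈ cornersFin k n A, (if C ⊆ S then (1:ℝ) else 0) := by
      intro S hS
      rw [Finset.mem_powerset] at hS
      have : cornersFin k n S = (cornersFin k n A).filter (fun C => C ⊆ S) := by
        ext C
        simp only [cornersFin, Finset.mem_filter, Finset.mem_powerset]
        constructor
        · rintro ⟨hCS, hcor⟩
          exact ⟨⟨hCS.trans hS, hcor⟩, hCS⟩
        · rintro ⟨⟨-, hcor⟩, hCS⟩
          exact ⟨hCS, hcor⟩
      rw [this, Finset.card_filter]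
      push_cast
      apply Finset.sum_congr rfl
      intro C hC
      split <;> simp
    calc ∑ S ∈ A.powerset, w S * ((cornersFin k n S).card : ℝ)
        = ∑ S ∈ A.powerset, ∑ C ∈ cornersFin k n A, w S * (if C ⊆ S then (1:ℝ) else 0) := by
          apply Finset.sum_congr rfl
          intro S hS
          rw [hfilter S hS, Finset.mul_sum]
      _ = ∑ C ∈ cornersFin k n A, ∑ S ∈ A.powerset, w S * (if C ⊆ S then (1:ℝ) else 0) :=
          Finset.sum_comm
      _ = ∑ C ∈ cornersFin k n A, p ^ (k + 1) := by
          apply Finset.sum_congr rfl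
          intro C hC
          simp only [cornersFin, Finset.mem_filter, Finset.mem_powerset] at hC
          rw [← corner_card hC.2]
          rw [← sum_powerset_weight_filter A C hC.1 p q hpq]
          rw [Finset.sum_filter]
          apply Finset.sum_congr rfl
          intro S hS
          split <;> simp [hw]
      _ = p ^ (k + 1) * ((cornersFin k n A).card : ℝ) := by
          rw [Finset.sum_const, nsmul_eq_mul, mul_comm]
  -- Step B: weighted size
  have stepB : ∑ S ∈ A.powerset, w S * (S.card : ℝ) = p * (A.card : ℝ) := by
    have hcardsum : ∀ S ∈ A.powerset,
        (S.card : ℝ) = ∑ x ∈ A, (if ({x} : Finset _) ⊆ S then (1:ℝ) else 0) := by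
      intro S hS
      rw [Finset.mem_powerset] at hS
      have : S = A.filter (fun x => ({x} : Finset _) ⊆ S) := by
        ext x
        simp only [Finset.mem_filter, Finset.singleton_subset_iff]
        exact ⟨fun hx => ⟨hS hx, hx⟩, fun h => h.2⟩
      conv_lhs => rw [this]
      rw [Finset.card_filter]
      push_cast
      apply Finset.sum_congr rfl
      intro x hx
      split <;> simp
    calc ∑ S ∈ A.powerset, w S * (S.card : ℝ)
        = ∑ S ∈ A.powerset, ∑ x ∈ A, w S * (if ({x} : Finset _) ⊆ S then (1:ℝ) else 0) := by
          apply Finset.sum_congr rfl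
          intro S hS
          rw [hcardsum S hS, Finset.mul_sum]
      _ = ∑ x ∈ A, ∑ S ∈ A.powerset, w S * (if ({x} : Finset _) ⊆ S then (1:ℝ) else 0) :=
          Finset.sum_comm
      _ = ∑ x ∈ A, p := by
          apply Finset.sum_congr rfl
          intro x hx
          have := sum_powerset_weight_filter A {x} (Finset.singleton_subset_iff.2 hx) p q hpq
          rw [Finset.card_singleton, pow_one] at this
          rw [← this, Finset.sum_filter]
          apply Finset.sum_congr rfl
          intro S hS
          split <;> simp [hw]
      _ = p * (A.card : ℝ) := by rw [Finset.sum_const, nsmul_eq_mul, mul_comm]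
  -- Step C: total weight
  have stepC : ∑ S ∈ A.powerset, w S = 1 := by
    have := sum_powerset_weight A p q
    rw [hpq, one_pow] at this
    exact this
  -- Combine with deletion lemma
  have key : p ^ (k + 1) * ((cornersFin k n A).card : ℝ) ≥ p * (A.card : ℝ) - c := by
    rw [← stepA]
    have hdel : ∀ S ∈ A.powerset, w S * ((S.card : ℝ) - c) ≤ w S * ((cornersFin k n S).card : ℝ) := by
      intro S hS
      rw [Finset.mem_powerset] at hS
      apply mul_le_mul_of_nonneg_left _ (hw0 S)
      have hnat := deletion (k := k) (n := n) S (hS.trans hA)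
      have h4 : (S.card : ℝ) ≤ ((cornersFin k n S).card : ℝ) + (cornerFreeNumber k n : ℝ) := by
        exact_mod_cast hnat
      rw [← hc] at h4
      linarith
    calc p * (A.card : ℝ) - c
        = ∑ S ∈ A.powerset, w S * ((S.card : ℝ) - c) := by
          rw [show (fun S => w S * ((S.card:ℝ) - c)) = fun S => w S * (S.card:ℝ) - w S * c by
            funext S; ring]
          rw [Finset.sum_sub_distrib, stepB, ← Finset.sum_mul, stepC, one_mul]
      _ ≤ ∑ S ∈ A.powerset, w S * ((cornersFin k n S).card : ℝ) :=
          Finset.sum_le_sum hdel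
  have hpA : 2 * c ≤ p * (A.card : ℝ) := by
    rw [hp]
    rw [div_mul_eq_mul_div, le_div_iff₀ hK0]
    calc 2 * c * K = 2 * (K * c) := by ring
      _ ≤ 2 * (A.card : ℝ) := by linarith
      _ = 2 * (A.card : ℝ) := rfl
  have key2 : c ≤ p ^ (k + 1) * ((cornersFin k n A).card : ℝ) := by linarith
  have hKp : K / 2 = p⁻¹ := by
    rw [hp]; field_simp
  rw [cornerCount_eq, hKp, inv_pow]
  rw [inv_mul_le_iff₀ (by positivity : (0:ℝ) < p ^ (k + 1))]
  exact key2
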